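/- Let n be a positive integer and let G be the subgroup of GL(3,ℂ) generated by E and L_n (the group Δ(3n²)). Then the number of group homomorphisms from G to ℂˣ (equivalently, the number of inequivalent one-dimensional complex irreducible representations of G) is 3 if n is not divisible by 3, and 9 if n is divisible by 3. -/

import Mathlib

open Matrix

/-- The matrix `E` with entries `E₀₁ = E₁₂ = E₂₀ = 1` and all other entries `0`. -/
noncomputable def Ematrix : Matrix (Fin 3) (Fin 3) ℂ := !![0, 1, 0; 0, 0, 1; 1, 0, 0]

/-- The matrix `L_n = diag(1, ν, ν⁻¹)` with `ν = exp(2πi/n)`. -/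
noncomputable def Lmatrix (n : ℕ) : Matrix (Fin 3) (Fin 3) ℂ :=
  Matrix.diagonal ![1, Complex.exp (2 * (Real.pi : ℂ) * Complex.I / (n : ℂ)),
    (Complex.exp (2 * (Real.pi : ℂ) * Complex.I / (n : ℂ)))⁻¹]

noncomputable def zeta (n : ℕ) : ℂ := Complex.exp (2 * (Real.pi : ℂ) * Complex.I / (n : ℂ))

lemma zeta_ne_zero (n : ℕ) : zeta n ≠ 0 := Complex.exp_ne_zero _

lemma zeta_pow_n {n : ℕ} (hn : 0 < n) : zeta n ^ n = 1 := by
  rw [zeta, ← Complex.exp_nat_mul]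
  have hne : (n : ℂ) ≠ 0 := Nat.cast_ne_zero.2 hn.ne'
  rw [show (n : ℂ) * (2 * (Real.pi : ℂ) * Complex.I / (n : ℂ)) = 2 * (Real.pi : ℂ) * Complex.I by
    field_simp]
  exact Complex.exp_two_pi_mul_I

noncomputable def dmat (d : Fin 3 → ℂˣ) : Matrix (Fin 3) (Fin 3) ℂ :=
  Matrix.diagonal (fun i => (d i : ℂ))

lemma dmat_one : dmat 1 = 1 := by simp [dmat]

lemma dmat_expand (d : Fin 3 → ℂˣ) :
    dmat d = !![(d 0 : ℂ), 0, 0; 0, (d 1 : ℂ), 0; 0, 0, (d 2 : ℂ)] := by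
  ext i j
  fin_cases i <;> fin_cases j <;>
    simp [dmat, Matrix.diagonal, Matrix.vecHead, Matrix.vecTail]

lemma Lmatrix_eq (n : ℕ) :
    Lmatrix n = !![1, 0, 0; 0, zeta n, 0; 0, 0, (zeta n)⁻¹] := by
  ext i j
  fin_cases i <;> fin_cases j <;>
    simp [Lmatrix, zeta, Matrix.diagonal, Matrix.vecHead, Matrix.vecTail]

lemma LE_pow3 (n : ℕ) : (Lmatrix n * Ematrix) ^ 3 = 1 := by
  have hz := zeta_ne_zero n
  rw [Lmatrix_eq, Ematrix, pow_succ, pow_succ, pow_one]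
  rw [Matrix.mul_fin_three, Matrix.mul_fin_three, Matrix.mul_fin_three]
  norm_num
  rw [inv_mul_cancel₀ hz, mul_inv_cancel₀ hz]
  ext i j
  fin_cases i <;> fin_cases j <;> simp [Matrix.one_apply, Matrix.vecHead, Matrix.vecTail]

lemma Ematrix_pow3 : Ematrix ^ 3 = 1 := by
  rw [pow_succ, pow_succ, pow_one, Ematrix]
  rw [Matrix.mul_fin_three, Matrix.mul_fin_three]
  norm_num
  ext i j
  fin_cases i <;> fin_cases j <;> simp [Matrix.one_apply, Matrix.vecHead, Matrix.vecTail]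

lemma Ematrix_pow_mod (k : ℕ) : Ematrix ^ k = Ematrix ^ (k % 3) := by
  conv_lhs => rw [← Nat.div_add_mod k 3]
  rw [pow_add, pow_mul, Ematrix_pow3, one_pow, one_mul]

lemma dE (d : Fin 3 → ℂˣ) :
    dmat d * Ematrix = Ematrix * dmat (fun j => d (j - 1)) := by
  have h0 : (0:Fin 3) - 1 = 2 := by decide
  have h1 : (1:Fin 3) - 1 = 0 := by decide
  have h2 : (2:Fin 3) - 1 = 1 := by decide
  rw [dmat_expand, dmat_expand, Ematrix, Matrix.mul_fin_three, Matrix.mul_fin_three]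
  simp only [h0, h1, h2]
  norm_num

lemma dEpow (d : Fin 3 → ℂˣ) (l : Fin 3) :
    dmat d * Ematrix ^ (l : ℕ) = Ematrix ^ (l : ℕ) * dmat (fun i => d (i - l)) := by
  fin_cases l
  · simpa using congrArg dmat (funext fun i => by norm_num)
  · simpa using dE d
  · show dmat d * Ematrix ^ 2 = Ematrix ^ 2 * dmat (fun i => d (i - 2))
    rw [pow_two, ← mul_assoc, dE d, mul_assoc, dE, ← mul_assoc, ← pow_two]
    congr 1
    apply congrArg dmat
    funext i
    congr 1
    rw [sub_sub]
    norm_num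
    rfl

/-- the structure predicate: `g = E^k · diag d` with `d` made of `n`-th roots of unity
of product `1`. -/
def Qrep (n : ℕ) (g : GL (Fin 3) ℂ) (p : Fin 3 × (Fin 3 → ℂˣ)) : Prop :=
  (∀ i, p.2 i ^ n = 1) ∧ (p.2 0 * p.2 1 * p.2 2 = 1) ∧
    (g : Matrix (Fin 3) (Fin 3) ℂ) = Ematrix ^ (p.1 : ℕ) * dmat p.2

lemma prod_shift (d : Fin 3 → ℂˣ) (l : Fin 3) :
    d (0 - l) * d (1 - l) * d (2 - l) = d 0 * d 1 * d 2 := by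
  fin_cases l
  · norm_num
  · show d 2 * d 0 * d 1 = d 0 * d 1 * d 2
    exact mul_rotate _ _ _
  · show d 1 * d 2 * d 0 = d 0 * d 1 * d 2
    exact (mul_rotate _ _ _).symm

lemma dmat_mul (d e : Fin 3 → ℂˣ) : dmat d * dmat e = dmat (d * e) := by
  simp [dmat, Matrix.diagonal_mul_diagonal]

lemma Qrep_mul {n : ℕ} {g h : GL (Fin 3) ℂ} {k l : Fin 3} {d e : Fin 3 → ℂˣ}
    (hg : Qrep n g (k, d)) (hh : Qrep n h (l, e)) :
    Qrep n (g * h) (k + l, fun i => d (i - l) * e i) := by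
  obtain ⟨hdn, hdp, hgv⟩ := hg
  obtain ⟨hen, hep, hhv⟩ := hh
  refine ⟨fun i => by rw [mul_pow, hdn, hen, one_mul], ?_, ?_⟩
  · show d (0 - l) * e 0 * (d (1 - l) * e 1) * (d (2 - l) * e 2) = 1
    calc d (0 - l) * e 0 * (d (1 - l) * e 1) * (d (2 - l) * e 2)
        = d (0 - l) * d (1 - l) * d (2 - l) * (e 0 * e 1 * e 2) := by
          rw [mul_mul_mul_comm (d (0-l)) (e 0), mul_mul_mul_comm (d (0-l) * d (1-l))]
      _ = 1 := by rw [prod_shift, hdp, hep, one_mul]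
  · show (↑(g * h) : Matrix (Fin 3) (Fin 3) ℂ) = _
    rw [Units.val_mul, hgv, hhv]
    calc Ematrix ^ (k:ℕ) * dmat d * (Ematrix ^ (l:ℕ) * dmat e)
        = Ematrix ^ (k:ℕ) * (dmat d * Ematrix ^ (l:ℕ)) * dmat e := by
          rw [mul_assoc, mul_assoc, mul_assoc]
      _ = Ematrix ^ (k:ℕ) * (Ematrix ^ (l:ℕ) * dmat (fun i => d (i - l))) * dmat e := by
          rw [dEpow]
      _ = Ematrix ^ ((k:ℕ) + (l:ℕ)) * (dmat (fun i => d (i - l)) * dmat e) := by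
          rw [pow_add]; noncomm_ring
      _ = Ematrix ^ (((k + l : Fin 3)):ℕ) * dmat (fun i => d (i - l) * e i) := by
          rw [dmat_mul, Fin.val_add, ← Ematrix_pow_mod]
          rfl

lemma EdEntry_row0 (k : Fin 3) (d : Fin 3 → ℂˣ) (l : Fin 3) :
    (Ematrix ^ (k : ℕ) * dmat d) 0 l = if l = k then (d l : ℂ) else 0 := by
  fin_cases k <;> fin_cases l <;>
    simp [Ematrix_pow_mod, pow_succ, Ematrix, dmat_expand, Matrix.mul_fin_three,
      Matrix.vecHead, Matrix.vecTail]

lemma Qrep_uniq {n : ℕ} {g : GL (Fin 3) ℂ} {p q : Fin 3 × (Fin 3 → ℂˣ)}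
    (hp : Qrep n g p) (hq : Qrep n g q) : p = q := by
  obtain ⟨k, d⟩ := p
  obtain ⟨k', d'⟩ := q
  have hv : Ematrix ^ (k:ℕ) * dmat d = Ematrix ^ (k':ℕ) * dmat d' := by
    rw [← hp.2.2, ← hq.2.2]
  have hk : k = k' := by
    by_contra hne
    have h1 := congrFun (congrFun hv 0) k
    rw [EdEntry_row0, EdEntry_row0, if_pos rfl, if_neg hne] at h1
    exact (d k).ne_zero h1
  subst hk
  have hd : dmat d = dmat d' := by
    have hEk : Ematrix ^ ((3 - (k:ℕ)) % 3 + (k:ℕ)) = 1 := by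
      have : ((3 - (k:ℕ)) % 3 + (k:ℕ)) % 3 = 0 := by omega
      rw [Ematrix_pow_mod, this, pow_zero]
    have := congrArg (fun M => Ematrix ^ ((3 - (k:ℕ)) % 3) * M) hv
    simpa only [← mul_assoc, ← pow_add, hEk, one_mul] using this
  have : d = d' := by
    funext i
    have := congrFun (congrFun hd i) i
    simp only [dmat, Matrix.diagonal_apply_eq] at this
    exact Units.ext this
  rw [this]

def PredQ (n : ℕ) (g : GL (Fin 3) ℂ) : Prop := ∃ p, Qrep n g p

lemma PredQ_mul {n : ℕ} {g h : GL (Fin 3) ℂ} (hg : PredQ n g) (hh : PredQ n h) :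
    PredQ n (g * h) := by
  obtain ⟨⟨k, d⟩, hg⟩ := hg
  obtain ⟨⟨l, e⟩, hh⟩ := hh
  exact ⟨_, Qrep_mul hg hh⟩

noncomputable def zu (n : ℕ) : ℂˣ := Units.mk0 (zeta n) (zeta_ne_zero n)

noncomputable def dL (n : ℕ) : Fin 3 → ℂˣ := ![1, zu n, (zu n)⁻¹]

lemma dmat_dL (n : ℕ) : dmat (dL n) = Lmatrix n := by
  rw [dmat_expand, Lmatrix_eq]
  have h0 : ((dL n 0 : ℂˣ) : ℂ) = 1 := rfl
  have h1 : ((dL n 1 : ℂˣ) : ℂ) = zeta n := rfl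
  have h2 : ((dL n 2 : ℂˣ) : ℂ) = (zeta n)⁻¹ := by
    show (((zu n)⁻¹ : ℂˣ) : ℂ) = (zeta n)⁻¹
    rw [Units.val_inv_eq_inv_val]
    rfl
  rw [h0, h1, h2]

lemma zu_pow_n {n : ℕ} (hn : 0 < n) : zu n ^ n = 1 := by
  ext
  push_cast [zu]
  exact zeta_pow_n hn

lemma hQL {n : ℕ} (hn : 0 < n) (L : GL (Fin 3) ℂ) (hL : L.val = Lmatrix n) :
    Qrep n L (0, dL n) := by
  refine ⟨?_, ?_, ?_⟩
  · intro i
    fin_cases i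
    · show (1 : ℂˣ) ^ n = 1; exact one_pow n
    · exact zu_pow_n hn
    · show ((zu n)⁻¹) ^ n = 1
      rw [inv_pow, zu_pow_n hn, inv_one]
  · show (1 : ℂˣ) * zu n * (zu n)⁻¹ = 1
    rw [one_mul, mul_inv_cancel]
  · show L.val = Ematrix ^ ((0 : Fin 3) : ℕ) * dmat (dL n)
    rw [hL, dmat_dL]
    norm_num

lemma hQE {n : ℕ} (E : GL (Fin 3) ℂ) (hE : E.val = Ematrix) : Qrep n E (1, 1) := by
  refine ⟨fun i => one_pow n, by norm_num, ?_⟩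
  show E.val = Ematrix ^ ((1 : Fin 3) : ℕ) * dmat 1
  rw [hE, dmat_one]
  norm_num

lemma hQone (n : ℕ) : Qrep n 1 (0, 1) := by
  refine ⟨fun i => one_pow n, by norm_num, ?_⟩
  show ((1 : GL (Fin 3) ℂ) : Matrix (Fin 3) (Fin 3) ℂ) = _
  rw [Units.val_one, dmat_one]
  norm_num

lemma hE3 (E : GL (Fin 3) ℂ) (hE : E.val = Ematrix) : E ^ 3 = 1 := by
  ext
  rw [Units.val_pow_eq_pow_val, hE, Ematrix_pow3, Units.val_one]

lemma hLn {n : ℕ} (hn : 0 < n) (L : GL (Fin 3) ℂ) (hL : L.val = Lmatrix n) : L ^ n = 1 := by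
  ext
  rw [Units.val_pow_eq_pow_val, hL, ← dmat_dL, Units.val_one]
  rw [dmat, Matrix.diagonal_pow]
  have hfun : (fun i => ((dL n i : ℂˣ) : ℂ)) ^ n = fun _ => 1 := by
    funext i
    have h := (hQL hn L hL).1 i
    calc ((fun i => ((dL n i : ℂˣ) : ℂ)) ^ n) i = ((dL n i : ℂˣ) : ℂ) ^ n := rfl
      _ = (((dL n i) ^ n : ℂˣ) : ℂ) := by push_cast; ring
      _ = 1 := by rw [h, Units.val_one]
  rw [hfun, Matrix.diagonal_one]

lemma hLE3 {n : ℕ} (E L : GL (Fin 3) ℂ) (hE : E.val = Ematrix) (hL : L.val = Lmatrix n) :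
    (L * E) ^ 3 = 1 := by
  ext
  rw [Units.val_pow_eq_pow_val, Units.val_mul, hE, hL, LE_pow3 n, Units.val_one]

lemma memPred {n : ℕ} (hn : 0 < n) (E L : GL (Fin 3) ℂ)
    (hE : E.val = Ematrix) (hL : L.val = Lmatrix n) :
    ∀ g ∈ Subgroup.closure ({E, L} : Set (GL (Fin 3) ℂ)), PredQ n g := by
  have hQEinv : PredQ n E⁻¹ := by
    have h3 : E * (E * E) = 1 := by
      have := hE3 E hE
      rwa [pow_succ, pow_succ, pow_one, mul_assoc] at this
    rw [inv_eq_of_mul_eq_one_right h3]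
    exact PredQ_mul ⟨_, hQE E hE⟩ ⟨_, hQE E hE⟩
  have hLpow : ∀ m : ℕ, PredQ n (L ^ m) := by
    intro m
    induction m with
    | zero => exact ⟨_, by rw [pow_zero]; exact hQone n⟩
    | succ m ih =>
      rw [pow_succ]
      exact PredQ_mul ih ⟨_, hQL hn L hL⟩
  have hQLinv : PredQ n L⁻¹ := by
    have h : L * L ^ (n - 1) = 1 := by
      rw [← pow_succ', show n - 1 + 1 = n by omega]
      exact hLn hn L hL
    rw [inv_eq_of_mul_eq_one_right h]
    exact hLpow _
  intro g hg
  induction hg using Subgroup.closure_induction_left with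
  | one => exact ⟨_, hQone n⟩
  | mul_left x hx y hy ih =>
    rcases hx with hx | hx
    · subst hx; exact PredQ_mul ⟨_, hQE _ hE⟩ ih
    · rw [Set.mem_singleton_iff] at hx
      subst hx; exact PredQ_mul ⟨_, hQL hn _ hL⟩ ih
  | inv_mul_cancel x hx y hy ih =>
    rcases hx with hx | hx
    · subst hx; exact PredQ_mul hQEinv ih
    · rw [Set.mem_singleton_iff] at hx
      subst hx; exact PredQ_mul hQLinv ih
lemma key1C (s : ℕ) (A B C : ℂ) (hA : A ≠ 0) (hB : B ≠ 0) (h1 : A * B * C = 1)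
    (h3 : A ^ (3 * s) = 1) : (C * A⁻¹) ^ s = (A * B⁻¹) ^ s := by
  have hX3 : (A ^ s) ^ 3 = 1 := by rw [← pow_mul, mul_comm]; exact h3
  have hC : C = (A * B)⁻¹ := by
    field_simp
    linear_combination h1
  subst hC
  rw [mul_pow, mul_pow, inv_pow, inv_pow, mul_pow]
  field_simp
  rw [hX3, one_div, inv_pow, one_mul, mul_inv_cancel₀ (pow_ne_zero _ hB)]

lemma key2C (s : ℕ) (A B C : ℂ) (hA : A ≠ 0) (hB : B ≠ 0) (h1 : A * B * C = 1)
    (h3 : B ^ (3 * s) = 1) : (B * C⁻¹) ^ s = (A * B⁻¹) ^ s := by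
  have hY3 : (B ^ s) ^ 3 = 1 := by rw [← pow_mul, mul_comm]; exact h3
  have hC : C = (A * B)⁻¹ := by
    field_simp
    linear_combination h1
  subst hC
  rw [mul_pow, mul_pow, inv_pow, inv_pow, mul_pow]
  field_simp
  rw [one_div, inv_pow]
  exact eq_inv_of_mul_eq_one_left (by rw [← pow_succ]; exact hY3)

lemma unit_eq_of_val (a b : ℂˣ) (h : (a : ℂ) = (b : ℂ)) : a = b := Units.ext h

lemma key1U (s : ℕ) (a b c : ℂˣ) (h1 : a * b * c = 1) (h3 : a ^ (3 * s) = 1) :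
    (c * a⁻¹) ^ s = (a * b⁻¹) ^ s := by
  apply Units.ext
  rw [Units.val_pow_eq_pow_val, Units.val_pow_eq_pow_val, Units.val_mul, Units.val_mul,
    Units.val_inv_eq_inv_val, Units.val_inv_eq_inv_val]
  refine key1C s a b c a.ne_zero b.ne_zero ?_ ?_
  · have := congrArg Units.val h1
    rwa [Units.val_mul, Units.val_mul, Units.val_one] at this
  · have := congrArg Units.val h3
    rwa [Units.val_pow_eq_pow_val, Units.val_one] at this

lemma key2U (s : ℕ) (a b c : ℂˣ) (h1 : a * b * c = 1) (h3 : b ^ (3 * s) = 1) :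
    (b * c⁻¹) ^ s = (a * b⁻¹) ^ s := by
  apply Units.ext
  rw [Units.val_pow_eq_pow_val, Units.val_pow_eq_pow_val, Units.val_mul, Units.val_mul,
    Units.val_inv_eq_inv_val, Units.val_inv_eq_inv_val]
  refine key2C s a b c a.ne_zero b.ne_zero ?_ ?_
  · have := congrArg Units.val h1
    rwa [Units.val_mul, Units.val_mul, Units.val_one] at this
  · have := congrArg Units.val h3
    rwa [Units.val_pow_eq_pow_val, Units.val_one] at this

lemma cycInv (s : ℕ) (d : Fin 3 → ℂˣ) (hdp : d 0 * d 1 * d 2 = 1)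
    (h0 : (d 0) ^ (3 * s) = 1) (h1 : (d 1) ^ (3 * s) = 1) (l : Fin 3) :
    (d (0 - l) * (d (1 - l))⁻¹) ^ s = (d 0 * (d 1)⁻¹) ^ s := by
  fin_cases l
  · rfl
  · show (d 2 * (d 0)⁻¹) ^ s = (d 0 * (d 1)⁻¹) ^ s
    exact key1U s (d 0) (d 1) (d 2) hdp h0
  · show (d 1 * (d 2)⁻¹) ^ s = (d 0 * (d 1)⁻¹) ^ s
    exact key2U s (d 0) (d 1) (d 2) hdp h1

lemma usplit (s : ℕ) (a b c e : ℂˣ) :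
    (a * c * (b * e)⁻¹) ^ s = (a * b⁻¹) ^ s * (c * e⁻¹) ^ s := by
  rw [mul_inv, ← mul_pow, mul_mul_mul_comm]

/-- The group `Δ(3n²)`, generated by `E` and `L_n` inside `GL(3,ℂ)`, has `3` one-dimensional
irreducible representations (i.e. homomorphisms into `ℂˣ`) if `3 ∤ n`, and `9` if `3 ∣ n`. -/
theorem delta_3n2_singlets (n : ℕ) (hn : 0 < n) (E L : GL (Fin 3) ℂ)
    (hE : E.val = Ematrix) (hL : L.val = Lmatrix n) :
    Nat.card (↥(Subgroup.closure ({E, L} : Set (GL (Fin 3) ℂ))) →* ℂˣ)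
      = if 3 ∣ n then 9 else 3 := by
  classical
  set G := Subgroup.closure ({E, L} : Set (GL (Fin 3) ℂ)) with hG
  have hEmem : E ∈ G := Subgroup.subset_closure (Set.mem_insert _ _)
  have hLmem : L ∈ G := Subgroup.subset_closure (Set.mem_insert_of_mem _ rfl)
  set e' : ↥G := ⟨E, hEmem⟩ with he'
  set l' : ↥G := ⟨L, hLmem⟩ with hl'
  have he3 : e' ^ 3 = 1 := by
    apply Subtype.ext
    rw [SubmonoidClass.coe_pow, OneMemClass.coe_one]
    exact hE3 E hE
  have hln : l' ^ n = 1 := by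
    apply Subtype.ext
    rw [SubmonoidClass.coe_pow, OneMemClass.coe_one]
    exact hLn hn L hL
  have hle3 : (l' * e') ^ 3 = 1 := by
    apply Subtype.ext
    rw [SubmonoidClass.coe_pow, OneMemClass.coe_one, MulMemClass.coe_mul]
    exact hLE3 E L hE hL
  have hcon : ∀ φ : ↥G →* ℂˣ, (φ e') ^ 3 = 1 ∧ (φ l') ^ 3 = 1 ∧ (φ l') ^ n = 1 := by
    intro φ
    have h1 : (φ e') ^ 3 = 1 := by rw [← _root_.map_pow, he3, _root_.map_one]
    have h2 : (φ l') ^ n = 1 := by rw [← _root_.map_pow, hln, _root_.map_one]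
    refine ⟨h1, ?_, h2⟩
    have h3 : (φ l' * φ e') ^ 3 = 1 := by rw [← _root_.map_mul, ← _root_.map_pow, hle3, _root_.map_one]
    rw [mul_pow] at h3
    calc (φ l') ^ 3 = (φ l') ^ 3 * (φ e') ^ 3 := by rw [h1, mul_one]
      _ = 1 := h3
  have y_eq_one : ∀ y : ℂˣ, ¬ (3 ∣ n) → y ^ 3 = 1 → y ^ n = 1 → y = 1 := by
    intro y hdvd hy3 hyn
    have h3 : orderOf y ∣ 3 := orderOf_dvd_of_pow_eq_one hy3
    have hn' : orderOf y ∣ n := orderOf_dvd_of_pow_eq_one hyn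
    have hgd : orderOf y ∣ Nat.gcd 3 n := Nat.dvd_gcd h3 hn'
    have hco : Nat.gcd 3 n = 1 := (Nat.prime_three.coprime_iff_not_dvd).mpr hdvd
    rw [hco] at hgd
    exact orderOf_eq_one_iff.mp (Nat.dvd_one.mp hgd)
  have main : Nat.card (↥G →* ℂˣ)
      = Nat.card ({x : ℂˣ // x ^ 3 = 1} × {y : ℂˣ // y ^ 3 = 1 ∧ y ^ n = 1}) := by
    apply Nat.card_eq_of_bijective
      (fun φ => (⟨φ e', (hcon φ).1⟩, ⟨φ l', (hcon φ).2.1, (hcon φ).2.2⟩))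
    constructor
    · intro φ ψ hfq
      have he : φ e' = ψ e' := congrArg Subtype.val (congrArg Prod.fst hfq)
      have hl : φ l' = ψ l' := congrArg Subtype.val (congrArg Prod.snd hfq)
      refine MonoidHom.ext fun g => ?_
      obtain ⟨v, hv⟩ := g
      induction hv using Subgroup.closure_induction with
      | mem z hz =>
        rcases hz with hz | hz
        · subst hz; exact he
        · rw [Set.mem_singleton_iff] at hz; subst hz; exact hl
      | one => show φ 1 = ψ 1; rw [_root_.map_one, _root_.map_one]
      | mul a b ha hb iha ihb =>
        show φ (⟨a, ha⟩ * ⟨b, hb⟩) = ψ (⟨a, ha⟩ * ⟨b, hb⟩)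
        rw [_root_.map_mul, _root_.map_mul, iha, ihb]
      | inv a ha iha =>
        show φ (⟨a, ha⟩⁻¹) = ψ (⟨a, ha⟩⁻¹)
        rw [_root_.map_inv, _root_.map_inv, iha]
    · rintro ⟨⟨x, hx3⟩, ⟨y, hy3, hyn⟩⟩
      have hmem := memPred hn E L hE hL
      obtain ⟨s, hs1, hs2⟩ : ∃ s : ℕ,
          (∀ a : ℂˣ, a ^ n = 1 → a ^ (3 * s) = 1) ∧ ((zu n)⁻¹) ^ s = y := by
        by_cases hdvd : 3 ∣ n
        · have hzpow : zeta n ^ (n / 3) = Complex.exp (2 * (Real.pi : ℂ) * Complex.I / 3) := by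
            rw [zeta, ← Complex.exp_nat_mul]
            congr 1
            have hn3 : ((n / 3 : ℕ) : ℂ) * 3 = (n : ℂ) := by
              exact_mod_cast congrArg (Nat.cast : ℕ → ℂ) (Nat.div_mul_cancel hdvd)
            have hne : (n : ℂ) ≠ 0 := Nat.cast_ne_zero.2 hn.ne'
            field_simp
            exact hn3
          have hprim : IsPrimitiveRoot ((Complex.exp (2 * (Real.pi : ℂ) * Complex.I / 3))⁻¹) 3 :=
            (Complex.isPrimitiveRoot_exp 3 (by norm_num)).inv
          have hyval : ((y : ℂ)) ^ 3 = 1 := by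
            have := congrArg Units.val hy3
            rwa [Units.val_pow_eq_pow_val, Units.val_one] at this
          obtain ⟨m, _, hmw⟩ := hprim.eq_pow_of_pow_eq_one hyval
          refine ⟨(n / 3) * m, ?_, ?_⟩
          · intro a ha
            rw [show 3 * (n / 3 * m) = n * m by rw [← mul_assoc, Nat.mul_div_cancel' hdvd],
              pow_mul, ha, one_pow]
          · apply Units.ext
            rw [Units.val_pow_eq_pow_val, Units.val_inv_eq_inv_val]
            show ((zeta n)⁻¹) ^ (n / 3 * m) = (y : ℂ)
            rw [pow_mul, inv_pow, hzpow]
            exact hmw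
        · refine ⟨0, fun a ha => by rw [Nat.mul_zero, pow_zero], ?_⟩
          rw [pow_zero]
          exact (y_eq_one y hdvd hy3 hyn).symm
      set rep : ↥G → Fin 3 × (Fin 3 → ℂˣ) := fun g => (hmem g.1 g.2).choose with hrepdef
      have hrep : ∀ g : ↥G, Qrep n g.1 (rep g) := fun g => (hmem g.1 g.2).choose_spec
      have repEq : ∀ (g : ↥G) (p), Qrep n g.1 p → rep g = p :=
        fun g p hp => Qrep_uniq (hrep g) hp
      have hxmod : ∀ t : ℕ, x ^ (t % 3) = x ^ t := by
        intro t
        conv_rhs => rw [← Nat.div_add_mod t 3]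
        rw [pow_add, pow_mul, hx3, one_pow, one_mul]
      refine ⟨MonoidHom.mk'
        (fun g => x ^ ((rep g).1 : ℕ) * ((rep g).2 0 * ((rep g).2 1)⁻¹) ^ s) ?_, ?_⟩
      · intro g h
        have hgh : rep (g * h)
            = ((rep g).1 + (rep h).1, fun i => (rep g).2 (i - (rep h).1) * (rep h).2 i) :=
          repEq _ _ (Qrep_mul (hrep g) (hrep h))
        show x ^ ((rep (g * h)).1 : ℕ)
            * ((rep (g * h)).2 0 * ((rep (g * h)).2 1)⁻¹) ^ s = _
        rw [hgh]
        have hgq := hrep g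
        have hxp : x ^ ((((rep g).1 + (rep h).1) : Fin 3) : ℕ)
            = x ^ (((rep g).1 : Fin 3) : ℕ) * x ^ (((rep h).1 : Fin 3) : ℕ) := by
          rw [Fin.val_add, hxmod, pow_add]
        show x ^ ((((rep g).1 + (rep h).1) : Fin 3) : ℕ)
            * ((rep g).2 (0 - (rep h).1) * (rep h).2 0
              * ((rep g).2 (1 - (rep h).1) * (rep h).2 1)⁻¹) ^ s = _
        rw [hxp, usplit,
          cycInv s ((rep g).2) hgq.2.1 (hs1 _ (hgq.1 0)) (hs1 _ (hgq.1 1)) ((rep h).1)]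
        rw [mul_mul_mul_comm]
      · have hrepe : rep e' = (1, 1) := repEq e' (1, 1) (hQE E hE)
        have hrepl : rep l' = (0, dL n) := repEq l' (0, dL n) (hQL hn L hL)
        refine Prod.ext (Subtype.ext ?_) (Subtype.ext ?_)
        · show x ^ ((rep e').1 : ℕ) * ((rep e').2 0 * ((rep e').2 1)⁻¹) ^ s = x
          rw [hrepe]
          norm_num
        · show x ^ ((rep l').1 : ℕ) * ((rep l').2 0 * ((rep l').2 1)⁻¹) ^ s = y
          rw [hrepl]
          show x ^ (0 : ℕ) * ((1 : ℂˣ) * (zu n)⁻¹) ^ s = y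
          rw [pow_zero, one_mul, one_mul, hs2]
  rw [main, Nat.card_prod]
  have hx3card : Nat.card {x : ℂˣ // x ^ 3 = 1} = 3 := by
    have hequiv : {x : ℂˣ // x ^ 3 = 1} ≃ ↥(rootsOfUnity 3 ℂ) :=
      Equiv.subtypeEquivRight (fun x => (mem_rootsOfUnity 3 x).symm)
    rw [Nat.card_congr hequiv, Complex.card_rootsOfUnity]
  by_cases hdvd : 3 ∣ n
  · rw [if_pos hdvd, hx3card]
    have hycard : Nat.card {y : ℂˣ // y ^ 3 = 1 ∧ y ^ n = 1} = 3 := by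
      have hequiv : {y : ℂˣ // y ^ 3 = 1 ∧ y ^ n = 1} ≃ {y : ℂˣ // y ^ 3 = 1} :=
        Equiv.subtypeEquivRight (fun y => by
          constructor
          · exact fun h => h.1
          · intro h
            refine ⟨h, ?_⟩
            obtain ⟨c, rfl⟩ := hdvd
            rw [pow_mul, h, one_pow])
      rw [Nat.card_congr hequiv, hx3card]
    rw [hycard]
  · rw [if_neg hdvd, hx3card]
    have hycard : Nat.card {y : ℂˣ // y ^ 3 = 1 ∧ y ^ n = 1} = 1 := by
      have : Unique {y : ℂˣ // y ^ 3 = 1 ∧ y ^ n = 1} := by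
        refine ⟨⟨⟨1, one_pow 3, one_pow n⟩⟩, ?_⟩
        rintro ⟨y, hy3, hyn⟩
        exact Subtype.ext (y_eq_one y hdvd hy3 hyn)
      exact Nat.card_unique
    rw [hycard]
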